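/- Let K be a field. For each n ∈ ℤ there exists a unique K-linear derivation e_n of LaurentPolynomial K with e_n t = t^{n+1}, and the family (e_n)_{n ∈ ℤ} is a basis of the K-module Derivation K (LaurentPolynomial K) (LaurentPolynomial K). (The elements e_n = t^{n+1} d/dt, n ∈ ℤ, form a basis of U_1.) -/

import Mathlib

open LaurentPolynomial

variable (K : Type*) [Field K]

noncomputable def dlin : LaurentPolynomial K →ₗ[K] LaurentPolynomial K :=
  (Finsupp.lsum K fun n => LinearMap.toSpanSingleton K _ (n • T (n-1) : LaurentPolynomial K)) ∘ₗ
    (AddMonoidAlgebra.coeffLinearEquiv K).toLinearMap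

lemma dlin_single (n : ℤ) (a : K) :
    dlin K (AddMonoidAlgebra.single n a) = a • (n • T (n-1) : LaurentPolynomial K) :=
  Finsupp.lsum_single K _ _ _

lemma smul_T (m : ℤ) (a : K) : a • (T m : LaurentPolynomial K) = AddMonoidAlgebra.single m a := by
  rw [T, AddMonoidAlgebra.smul_single, smul_eq_mul, mul_one]

lemma dlin_C_mul_T (n : ℤ) (a : K) :
    dlin K (C a * T n) = n • (C a * T (n-1)) := by
  rw [← single_eq_C_mul_T, ← single_eq_C_mul_T, dlin_single, smul_comm, smul_T]

lemma CT_mul (a b : K) (n m : ℤ) : (C a * T n) * (C b * T m) = C (a*b) * T (n+m) := by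
  rw [mul_mul_mul_comm, ← map_mul, ← T_add]

lemma dlin_leibniz (p q : LaurentPolynomial K) :
    dlin K (p * q) = p * dlin K q + q * dlin K p := by
  induction p using LaurentPolynomial.induction_on' with
  | add p₁ p₂ h1 h2 =>
    rw [add_mul, map_add, h1, h2, map_add]; ring
  | C_mul_T n a =>
    induction q using LaurentPolynomial.induction_on' with
    | add q₁ q₂ h1 h2 =>
      rw [mul_add, map_add, h1, h2, map_add]; ring
    | C_mul_T m b =>
      rw [CT_mul, dlin_C_mul_T, dlin_C_mul_T, dlin_C_mul_T, mul_smul_comm, mul_smul_comm,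
        CT_mul, CT_mul, mul_comm b a, show n + (m-1) = n+m-1 by ring,
        show m + (n-1) = n+m-1 by ring, add_comm (n:ℤ) m, add_smul]

noncomputable def dd : Derivation K (LaurentPolynomial K) (LaurentPolynomial K) where
  toLinearMap := dlin K
  map_one_eq_zero' := by
    have h1 : (1 : LaurentPolynomial K) = C 1 * T 0 := by simp
    show dlin K 1 = 0
    rw [h1, dlin_C_mul_T, zero_smul]
  leibniz' a b := by
    show dlin K (a * b) = a • dlin K b + b • dlin K a
    rw [smul_eq_mul, smul_eq_mul, dlin_leibniz]

lemma dd_C_mul_T (n : ℤ) (a : K) : dd K (C a * T n) = n • (C a * T (n-1)) :=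
  dlin_C_mul_T K n a

lemma dd_T (n : ℤ) : dd K (T n) = n • (T (n-1) : LaurentPolynomial K) := by
  have h : (T n : LaurentPolynomial K) = C 1 * T n := by simp
  rw [h, dd_C_mul_T]
  simp

lemma dd_T_one : dd K (T 1) = 1 := by
  rw [dd_T]; simp

lemma apply_T (D : Derivation K (LaurentPolynomial K) (LaurentPolynomial K)) (n : ℤ) :
    D (T n) = (n • T (n-1) : LaurentPolynomial K) * D (T 1) := by
  induction n using Int.induction_on with
  | zero => simp
  | succ k ih =>
    rw [show ((k : ℤ) + 1) = (k : ℤ) + 1 from rfl, T_add, Derivation.leibniz,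
      smul_eq_mul, smul_eq_mul, ih, smul_mul_assoc, mul_smul_comm, ← mul_assoc, ← T_add,
      show (1:ℤ) + ((k:ℤ) - 1) = (k:ℤ) by ring, show ((k:ℤ) + 1 - 1) = (k:ℤ) by ring,
      add_smul, one_smul, add_mul, smul_mul_assoc]
    abel
  | pred k ih =>
    have key : (T (-(k:ℤ)) : LaurentPolynomial K) = T (-(k:ℤ)-1) * T 1 := by
      rw [← T_add]; ring_nf
    have h2 : T 1 * D (T (-(k:ℤ)-1)) =
        ((-(k:ℤ)-1) • T (-(k:ℤ)-1) : LaurentPolynomial K) * D (T 1) := by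
      have := key ▸ ih
      rw [Derivation.leibniz, smul_eq_mul, smul_eq_mul] at this
      have h3 : T 1 * D (T (-(k:ℤ)-1)) =
          ((-(k:ℤ)) • T (-(k:ℤ)-1) : LaurentPolynomial K) * D (T 1) - T (-(k:ℤ)-1) * D (T 1) := by
        rw [← this]; ring
      rw [h3, sub_smul, one_smul, sub_mul]
    have h4 := congrArg (fun x => (T (-1) : LaurentPolynomial K) * x) h2
    simp only [← mul_assoc, ← T_add] at h4
    rw [show (-1 : ℤ) + 1 = 0 by ring, T_zero, one_mul] at h4
    rw [h4]
    simp only [mul_smul_comm, smul_mul_assoc, ← mul_assoc, ← T_add]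
    rw [show (-1:ℤ) + (-(k:ℤ)-1) = -(k:ℤ)-1-1 by ring]

lemma derivation_ext {D₁ D₂ : Derivation K (LaurentPolynomial K) (LaurentPolynomial K)}
    (h : D₁ (T 1) = D₂ (T 1)) : D₁ = D₂ := by
  apply Derivation.ext
  intro f
  induction f using LaurentPolynomial.induction_on' with
  | add p q hp hq => rw [map_add, map_add, hp, hq]
  | C_mul_T n a =>
    rw [show (C a : LaurentPolynomial K) * T n = a • T n by
        rw [Algebra.smul_def, ← C_eq_algebraMap],
      Derivation.map_smul, Derivation.map_smul, apply_T K D₁ n, apply_T K D₂ n, h]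

/-- Evaluation at `T 1` as a linear equivalence. -/
noncomputable def ee :
    Derivation K (LaurentPolynomial K) (LaurentPolynomial K) ≃ₗ[K] LaurentPolynomial K where
  toFun D := D (T 1)
  map_add' D E := rfl
  map_smul' c D := rfl
  invFun f := f • dd K
  left_inv D := by
    apply derivation_ext
    rw [Derivation.smul_apply, dd_T_one, smul_eq_mul, mul_one]
  right_inv f := by
    show (f • dd K) (T 1) = f
    rw [Derivation.smul_apply, dd_T_one, smul_eq_mul, mul_one]

/-- The elements `e_n = t^{n+1} d/dt`, `n ∈ ℤ`, are well defined (unique derivations with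
`e_n t = t^{n+1}`) and form a `K`-basis of `U_1 = Derivation K K[t,t⁻¹] K[t,t⁻¹]`. -/
theorem exists_basis_en :
    (∀ n : ℤ, ∃! D : Derivation K (LaurentPolynomial K) (LaurentPolynomial K),
      D (T 1) = T (n + 1)) ∧
    ∃ B : Module.Basis ℤ K (Derivation K (LaurentPolynomial K) (LaurentPolynomial K)),
      ∀ n : ℤ, (B n) (T 1) = T (n + 1) := by
  constructor
  · intro n
    refine ⟨(T (n+1) : LaurentPolynomial K) • dd K, ?_, fun D hD => ?_⟩
    · show ((T (n+1) : LaurentPolynomial K) • dd K) (T 1) = T (n+1)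
      rw [Derivation.smul_apply, dd_T_one, smul_eq_mul, mul_one]
    · apply derivation_ext
      rw [hD, Derivation.smul_apply, dd_T_one, smul_eq_mul, mul_one]
  · have hB0 : ∀ n : ℤ, (AddMonoidAlgebra.basis ℤ K : Module.Basis ℤ K (LaurentPolynomial K)) n = T n := by
      intro n
      rw [show ((AddMonoidAlgebra.basis ℤ K : Module.Basis ℤ K (LaurentPolynomial K)) n : LaurentPolynomial K)
          = AddMonoidAlgebra.single n 1 from AddMonoidAlgebra.basis_apply K n]
      rfl
    refine ⟨((AddMonoidAlgebra.basis ℤ K : Module.Basis ℤ K (LaurentPolynomial K)).reindex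
        (Equiv.subRight (1:ℤ))).map (ee K).symm, fun n => ?_⟩
    rw [Module.Basis.map_apply, Module.Basis.reindex_apply]
    have h1 : (Equiv.subRight (1:ℤ)).symm n = n + 1 := rfl
    rw [h1, hB0]
    show (ee K) ((ee K).symm (T (n+1))) = T (n+1)
    rw [LinearEquiv.apply_symm_apply]
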